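/- Every continuous function X : [0,∞) → ℝ satisfying X(t) = ∫₀^t a(X(s)) ds for all t ≥ 0 satisfies −B⁻¹(t) ≤ X(t) ≤ A₊⁻¹(t) for all t ≥ 0; that is, x⁺(t) := A₊⁻¹(t) is the maximal and x⁻(t) := −B⁻¹(t) is the minimal solution of the equation starting at 0. -/

import Mathlib

open Filter Set MeasureTheory intervalIntegral

/-- If the primitive `u ↦ ∫_{(0,u]} f` has a left inverse on `[0,∞)`, then `f` is
integrable on `(0,u]` for every `u > 0`. -/
lemma integ_of_inj (f G : ℝ → ℝ)
    (hG : ∀ u ≥ (0:ℝ), G (∫ y in Set.Ioc (0:ℝ) u, f y) = u) :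
    ∀ u > (0:ℝ), IntegrableOn f (Set.Ioc 0 u) volume := by
  intro u hu
  by_contra h
  have h2 : ¬ IntegrableOn f (Set.Ioc 0 (u+1)) volume := fun hi =>
    h (hi.mono_set (Set.Ioc_subset_Ioc_right (by linarith)))
  have e1 : (∫ y in Set.Ioc (0:ℝ) u, f y) = 0 := integral_undef h
  have e2 : (∫ y in Set.Ioc (0:ℝ) (u+1), f y) = 0 := integral_undef h2
  have g1 := hG u hu.le
  have g2 := hG (u+1) (by linarith)
  rw [e1] at g1; rw [e2] at g2
  linarith [g1, g2]

/-- Strict monotonicity of the primitive of a positive integrable function. -/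
lemma strict_primitive (f : ℝ → ℝ) (hfpos : ∀ x > (0:ℝ), 0 < f x)
    (hInt : ∀ u > (0:ℝ), IntegrableOn f (Set.Ioc 0 u) volume)
    {p q : ℝ} (hp : 0 ≤ p) (hpq : p < q) :
    (∫ y in Set.Ioc (0:ℝ) p, f y) < ∫ y in Set.Ioc (0:ℝ) q, f y := by
  have hq : 0 < q := lt_of_le_of_lt hp hpq
  have hIq := hInt q hq
  have hIp : IntegrableOn f (Set.Ioc 0 p) volume := hIq.mono_set (Set.Ioc_subset_Ioc_right hpq.le)
  have hIpq : IntegrableOn f (Set.Ioc p q) volume := hIq.mono_set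
    (fun x hx => ⟨lt_of_le_of_lt hp hx.1, hx.2⟩)
  have hsplit : (∫ y in Set.Ioc (0:ℝ) q, f y)
      = (∫ y in Set.Ioc (0:ℝ) p, f y) + ∫ y in Set.Ioc p q, f y := by
    rw [← MeasureTheory.setIntegral_union (Set.Ioc_disjoint_Ioc_of_le le_rfl) measurableSet_Ioc hIp hIpq,
      Set.Ioc_union_Ioc_eq_Ioc hp hpq.le]
  -- positivity of ∫ over Ioc p q
  set m := (p + q) / 2 with hm
  have hpm : p < m := by simp only [hm]; linarith
  have hmq : m < q := by simp only [hm]; linarith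
  have hm0 : 0 < m := lt_of_le_of_lt hp hpm
  have hImq : IntegrableOn f (Set.Ioc m q) volume := hIpq.mono_set
    (fun x hx => ⟨lt_trans hpm hx.1, hx.2⟩)
  have hnn : 0 ≤ᵐ[volume.restrict (Set.Ioc p q)] f := by
    rw [EventuallyLE, MeasureTheory.ae_restrict_iff' measurableSet_Ioc]
    filter_upwards with x hx using (hfpos x (lt_of_le_of_lt hp hx.1)).le
  have h1 : (∫ y in Set.Ioc m q, f y) ≤ ∫ y in Set.Ioc p q, f y := by
    refine MeasureTheory.setIntegral_mono_set hIpq hnn ?_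
    exact Filter.Eventually.of_forall (fun x hx => ⟨lt_trans hpm hx.1, hx.2⟩)
  have h2 : 0 < ∫ y in Set.Ioc m q, f y := by
    have : (∫ y in Set.Ioc m q, f y) = ∫ y in m..q, f y := (integral_of_le hmq.le).symm
    rw [this]
    refine intervalIntegral_pos_of_pos_on ?_ (fun x hx => hfpos x (lt_trans hm0 hx.1)) hmq
    rw [intervalIntegrable_iff_integrableOn_Ioc_of_le hmq.le]
    exact hImq
  linarith

/-- Key comparison estimate: if `W` is a primitive of `D`, with `D s = F (W s)` whenever
`W s > 0`, then `∫_{(0, W t₀]} 1/F ≤ t₀`. -/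
lemma key_est (F : ℝ → ℝ) (hFc : ContinuousOn F (Set.Ioi 0)) (hFpos : ∀ x > (0:ℝ), 0 < F x)
    (hInt : ∀ u > (0:ℝ), IntegrableOn (fun y => 1 / F y) (Set.Ioc 0 u) volume)
    (D : ℝ → ℝ) (hD : Continuous D)
    (W : ℝ → ℝ) (hWD : ∀ t ≥ (0:ℝ), W t = ∫ s in (0:ℝ)..t, D s)
    (hmatch : ∀ s ≥ (0:ℝ), 0 < W s → D s = F (W s))
    (t0 : ℝ) (ht0 : 0 ≤ t0) (hpos : 0 < W t0) :
    (∫ y in Set.Ioc (0:ℝ) (W t0), 1 / F y) ≤ t0 := by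
  set P : ℝ → ℝ := fun t => ∫ s in (0:ℝ)..t, D s with hPdef
  have hP : ∀ t, HasDerivAt P (D t) t := fun t =>
    intervalIntegral.integral_hasDerivAt_right (hD.intervalIntegrable 0 t)
      (hD.stronglyMeasurable.stronglyMeasurableAtFilter) hD.continuousAt
  have Pcont : Continuous P := continuous_iff_continuousAt.2 fun t => (hP t).continuousAt
  have hPW : ∀ t ≥ (0:ℝ), W t = P t := hWD
  have P0 : P 0 = 0 := intervalIntegral.integral_same
  set M := W t0 with hMdef
  have hPt0 : P t0 = M := (hPW t0 ht0).symm
  have hfc : ContinuousOn (fun y => 1 / F y) (Set.Ioi 0) :=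
    continuousOn_const.div hFc (fun x hx => (hFpos x hx).ne')
  set G : ℝ → ℝ := fun u => ∫ y in (0:ℝ)..u, 1 / F y with hGdef
  have hGIoc : ∀ u ≥ (0:ℝ), G u = ∫ y in Set.Ioc (0:ℝ) u, 1 / F y := fun u hu =>
    intervalIntegral.integral_of_le hu
  have hG : ∀ x > (0:ℝ), HasDerivAt G (1 / F x) x := fun x hx =>
    intervalIntegral.integral_hasDerivAt_right
      ((intervalIntegrable_iff_integrableOn_Ioc_of_le hx.le).2 (hInt x hx))
      (hfc.stronglyMeasurableAtFilter isOpen_Ioi x hx)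
      (hfc.continuousAt (Ioi_mem_nhds hx))
  -- main step: for every small ε > 0, G M ≤ t0 + G ε
  have key2 : ∀ ε ∈ Set.Ioo (0:ℝ) M, G M ≤ t0 + G ε := by
    rintro ε ⟨hε0, hεM⟩
    set S : Set ℝ := Set.Icc 0 t0 ∩ P ⁻¹' (Set.Iic ε) with hSdef
    have hS_closed : IsClosed S := isClosed_Icc.inter (isClosed_Iic.preimage Pcont)
    have h0S : (0:ℝ) ∈ S := ⟨⟨le_refl 0, ht0⟩, by simp [P0, hε0.le]⟩
    have hbdd : BddAbove S := ⟨t0, fun x hx => hx.1.2⟩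
    set s2 := sSup S with hs2def
    have hs2 : s2 ∈ S := hS_closed.csSup_mem ⟨0, h0S⟩ hbdd
    have hs2_0 : 0 ≤ s2 := hs2.1.1
    have h_after : ∀ s ∈ Set.Ioc s2 t0, ε < P s := by
      intro s hs
      by_contra h
      push_neg at h
      have : s ∈ S := ⟨⟨le_trans hs2_0 hs.1.le, hs.2⟩, h⟩
      exact absurd (le_csSup hbdd this) (not_le.2 hs.1)
    have hs2t0 : s2 < t0 := by
      rcases lt_or_eq_of_le hs2.1.2 with h | h
      · exact h
      · exfalso
        have : P t0 ≤ ε := h ▸ hs2.2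
        rw [hPt0] at this; linarith
    have hPs2ge : ε ≤ P s2 := by
      have hev : ∀ᶠ s in nhdsWithin s2 (Set.Ioi s2), ε ≤ P s := by
        filter_upwards [Ioo_mem_nhdsGT hs2t0] with s hs
        exact (h_after s ⟨hs.1, hs.2.le⟩).le
      exact ge_of_tendsto (Pcont.continuousAt.tendsto.mono_left nhdsWithin_le_nhds) hev
    have hPs2 : P s2 = ε := le_antisymm hs2.2 hPs2ge
    have hlow : ∀ s ∈ Set.Icc s2 t0, ε ≤ P s := by
      intro s hs
      rcases eq_or_lt_of_le hs.1 with h | h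
      · rw [← h, hPs2]
      · exact (h_after s ⟨h, hs.2⟩).le
    have derivf : ∀ x ∈ Set.Ico s2 t0,
        HasDerivWithinAt (G ∘ P) ((fun _ : ℝ => (1:ℝ)) x) (Set.Ici x) x := by
      intro x hx
      have hx0 : 0 < P x := lt_of_lt_of_le hε0 (hlow x ⟨hx.1, hx.2.le⟩)
      have hxge : (0:ℝ) ≤ x := le_trans hs2_0 hx.1
      have hcomp := (hG (P x) hx0).comp x (hP x)
      have hDx : D x = F (P x) := by
        have := hmatch x hxge (by rw [hPW x hxge]; exact hx0)
        rwa [hPW x hxge] at this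
      have : HasDerivAt (G ∘ P) 1 x := by
        rw [hDx] at hcomp
        rw [div_mul_cancel₀ _ (hFpos _ hx0).ne'] at hcomp
        exact hcomp
      exact this.hasDerivWithinAt
    have derivg : ∀ x ∈ Set.Ico s2 t0,
        HasDerivWithinAt (fun s => s - s2 + G ε) ((fun _ : ℝ => (1:ℝ)) x) (Set.Ici x) x := by
      intro x _
      exact (((hasDerivAt_id x).sub_const s2).add_const (G ε)).hasDerivWithinAt
    have fcont : ContinuousOn (G ∘ P) (Set.Icc s2 t0) := by
      intro x hx
      have hx0 : 0 < P x := lt_of_lt_of_le hε0 (hlow x hx)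
      exact ((hG (P x) hx0).continuousAt.comp_continuousWithinAt Pcont.continuousWithinAt)
    have gcont : ContinuousOn (fun s => s - s2 + G ε) (Set.Icc s2 t0) :=
      (continuousOn_id.sub continuousOn_const).add continuousOn_const
    have hi : (G ∘ P) s2 = s2 - s2 + G ε := by
      simp [Function.comp, hPs2]
    have := eq_of_has_deriv_right_eq derivf derivg fcont gcont hi t0
      (Set.right_mem_Icc.2 hs2t0.le)
    have heq : G M = t0 - s2 + G ε := by
      rw [← hPt0]; exact this
    linarith
  -- limit ε → 0⁺
  have hIcc : IntegrableOn (fun y => 1 / F y) (Set.Icc 0 M) volume :=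
    (integrableOn_Icc_iff_integrableOn_Ioc).2 (hInt M hpos)
  have hAcont : ContinuousOn (fun u => ∫ y in Set.Ioc (0:ℝ) u, 1 / F y) (Set.Icc 0 M) :=
    continuousOn_primitive hIcc
  have hA0 : (∫ y in Set.Ioc (0:ℝ) (0:ℝ), 1 / F y) = 0 := by
    simp
  have hne : (nhdsWithin (0:ℝ) (Set.Ioo 0 M)).NeBot := by
    rw [← mem_closure_iff_nhdsWithin_neBot, closure_Ioo hpos.ne]
    exact Set.left_mem_Icc.2 hpos.le
  have htend : Tendsto (fun u => ∫ y in Set.Ioc (0:ℝ) u, 1 / F y)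
      (nhdsWithin (0:ℝ) (Set.Ioo 0 M)) (nhds 0) := by
    have := (hAcont 0 (Set.left_mem_Icc.2 hpos.le)).mono_left
      (nhdsWithin_mono 0 Set.Ioo_subset_Icc_self)
    simpa using this
  have hev : ∀ᶠ ε in nhdsWithin (0:ℝ) (Set.Ioo 0 M),
      G M - t0 ≤ ∫ y in Set.Ioc (0:ℝ) ε, 1 / F y := by
    filter_upwards [self_mem_nhdsWithin] with ε hε
    have := key2 ε hε
    rw [hGIoc ε hε.1.le] at this
    linarith
  have hfinal : G M - t0 ≤ 0 := ge_of_tendsto htend hev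
  rw [← hGIoc M hpos.le]
  linarith

/-- `x⁺(t) = A₊⁻¹(t)` and `x⁻(t) = −B⁻¹(t)` are the maximal and minimal
solutions of `X(t) = ∫₀^t a(X(s)) ds` starting at `0`. -/
theorem stmt_14 (a : ℝ → ℝ) (β Ap Am Cg : ℝ)
    (hβ : β ∈ Set.Ioo (0:ℝ) 1) (hAp : 0 < Ap) (hAm : 0 < Am) (hCg : 0 < Cg)
    (ha_cont : Continuous a) (ha0 : a 0 = 0)
    (hgrowth : ∀ x, |a x| ≤ Cg * (1 + |x|))
    (Lp Lm l : ℝ → ℝ)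
    (hLp_cont : ContinuousOn Lp (Set.Ioi 0)) (hLp_pos : ∀ x > (0:ℝ), 0 < Lp x)
    (hLm_cont : ContinuousOn Lm (Set.Ioi 0)) (hLm_pos : ∀ x > (0:ℝ), 0 < Lm x)
    (hform_p : ∀ x > (0:ℝ), a x = x ^ β * Lp x)
    (hform_m : ∀ x < (0:ℝ), a x = -(|x| ^ β * Lm |x|))
    (hl_cont : ContinuousOn l (Set.Ioi 0)) (hl_pos : ∀ x > (0:ℝ), 0 < l x)
    (hl_sv : ∀ lam > (0:ℝ), Tendsto (fun x => l (lam * x) / l x) atTop (nhds 1))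
    (hLp_asymp : Tendsto (fun x => Lp x / (Ap * l (1 / x))) (nhdsWithin 0 (Set.Ioi 0)) (nhds 1))
    (hLm_asymp : Tendsto (fun x => Lm x / (Am * l (1 / x))) (nhdsWithin 0 (Set.Ioi 0)) (nhds 1))
    (Ainv Binv : ℝ → ℝ)
    (hAinv_left : ∀ u ≥ (0:ℝ), Ainv (∫ y in Set.Ioc (0:ℝ) u, 1 / a y) = u)
    (hAinv_right : ∀ t ≥ (0:ℝ), 0 ≤ Ainv t ∧ (∫ y in Set.Ioc (0:ℝ) (Ainv t), 1 / a y) = t)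
    (hBinv_left : ∀ u ≥ (0:ℝ), Binv (∫ v in Set.Ioc (0:ℝ) u, 1 / (v ^ β * Lm v)) = u)
    (hBinv_right : ∀ t ≥ (0:ℝ),
      0 ≤ Binv t ∧ (∫ v in Set.Ioc (0:ℝ) (Binv t), 1 / (v ^ β * Lm v)) = t)
    (X : ℝ → ℝ) (hXc : ContinuousOn X (Set.Ici 0))
    (hXeq : ∀ t ≥ (0:ℝ), X t = ∫ s in (0:ℝ)..t, a (X s)) :
    ∀ t ≥ (0:ℝ), -Binv t ≤ X t ∧ X t ≤ Ainv t := by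
  -- positivity of the two one-sided coefficient functions
  have apos : ∀ x > (0:ℝ), 0 < a x := fun x hx => by
    rw [hform_p x hx]
    exact mul_pos (Real.rpow_pos_of_pos hx β) (hLp_pos x hx)
  have bpos : ∀ v > (0:ℝ), 0 < v ^ β * Lm v := fun v hv =>
    mul_pos (Real.rpow_pos_of_pos hv β) (hLm_pos v hv)
  -- integrability of the reciprocals near 0, from injectivity of the primitives
  have hIntA := integ_of_inj (fun y => 1 / a y) Ainv hAinv_left
  have hIntB := integ_of_inj (fun v => 1 / (v ^ β * Lm v)) Binv hBinv_left
  -- a continuous extension of the driving term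
  have hXm : Continuous (fun s : ℝ => X (max s 0)) :=
    hXc.comp_continuous (continuous_id.max continuous_const) (fun x => le_max_right x 0)
  set D : ℝ → ℝ := fun s => a (X (max s 0)) with hD
  have hDc : Continuous D := ha_cont.comp hXm
  have hWD : ∀ u ≥ (0:ℝ), X u = ∫ s in (0:ℝ)..u, D s := by
    intro u hu
    rw [hXeq u hu]
    apply intervalIntegral.integral_congr
    intro s hs
    rw [Set.uIcc_of_le hu] at hs
    simp [hD, max_eq_left hs.1]
  intro t ht
  constructor
  · -- lower bound
    rcases le_or_gt 0 (X t) with h | h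
    · linarith [(hBinv_right t ht).1]
    · set Fm : ℝ → ℝ := fun v => v ^ β * Lm v with hFm
      have hFmc : ContinuousOn Fm (Set.Ioi 0) := by
        apply ContinuousOn.mul ?_ hLm_cont
        intro x hx
        exact (Real.continuousAt_rpow_const x β (Or.inl (ne_of_gt hx))).continuousWithinAt
      have hWDm : ∀ u ≥ (0:ℝ), (fun u => -X u) u = ∫ s in (0:ℝ)..u, -D s := by
        intro u hu
        rw [intervalIntegral.integral_neg]
        exact congrArg Neg.neg (hWD u hu)
      have hmatch : ∀ s ≥ (0:ℝ), 0 < (fun u => -X u) s → -D s = Fm ((fun u => -X u) s) := by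
        intro s hs hps
        simp only at hps
        have hXs : X s < 0 := by linarith
        have : D s = a (X s) := by simp [hD, max_eq_left hs]
        rw [this, hform_m (X s) hXs, abs_of_neg hXs, neg_neg]
      have hkey := key_est Fm hFmc bpos hIntB (fun s => -D s) hDc.neg (fun u => -X u)
        hWDm hmatch t ht (by show 0 < -X t; linarith)
      by_contra hc
      push_neg at hc
      have hstrict := strict_primitive (fun v => 1 / (v ^ β * Lm v))
        (fun v hv => one_div_pos.2 (bpos v hv)) hIntB (hBinv_right t ht).1
        (show Binv t < -X t by linarith)
      rw [(hBinv_right t ht).2] at hstrict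
      simp only [hFm] at hkey
      linarith
  · -- upper bound
    rcases le_or_gt (X t) 0 with h | h
    · exact le_trans h (hAinv_right t ht).1
    · have hmatch : ∀ s ≥ (0:ℝ), 0 < X s → D s = a (X s) := by
        intro s hs _
        simp [hD, max_eq_left hs]
      have hkey := key_est a ha_cont.continuousOn apos hIntA D hDc X hWD hmatch t ht h
      by_contra hc
      push_neg at hc
      have hstrict := strict_primitive (fun y => 1 / a y)
        (fun x hx => one_div_pos.2 (apos x hx)) hIntA (hAinv_right t ht).1 hc
      rw [(hAinv_right t ht).2] at hstrict
      linarith
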